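/- Let (d^{i−1}, d^i) be a complex of free modules over a field κ with middle rank l, and let k ≥ 1 be an integer. Then dim_κ H^i ≥ k if and only if the cohomology jump ideal J^i_k is the zero ideal. -/

import Mathlib

/-- The determinantal ideal `I_m(M)`: the ideal generated by the `m × m` minors of `M`,
with the convention `I_m(M) = ⊤` for `m ≤ 0`; it is automatically `0` when
`m` exceeds the number of rows or columns of `M`. -/
def detIdeal {A : Type*} [CommRing A] {I J : Type*} (M : Matrix I J A) (m : ℤ) : Ideal A :=
  if m ≤ 0 then ⊤
  else Ideal.span {x | ∃ (r : Fin m.toNat → I) (c : Fin m.toNat → J),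
    Function.Injective r ∧ Function.Injective c ∧ x = (M.submatrix r c).det}

/-- The `i`-th cohomology jump ideal `J^i_k = ⋂_{(a,b), a+b = l-k+2} (I_a(d¹) + I_b(d²))`
of a complex `A^{l´} → A^l → A^{l´´}` with middle rank `l`, parametrized by `b = l-k+2-a`. -/
def jumpIdeal {A : Type*} [CommRing A] {l l1 l2 : ℕ}
    (d1 : Matrix (Fin l) (Fin l1) A) (d2 : Matrix (Fin l2) (Fin l) A) (k : ℤ) : Ideal A :=
  ⨅ a : ℤ, detIdeal d1 a + detIdeal d2 ((l : ℤ) - k + 2 - a)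

/-- The middle cohomology `H^i = ker(d²) / im(d¹)` of the complex
`A^{l´} → A^l → A^{l´´}` given by the matrices `d1`, `d2`. -/
abbrev midCohomology {A : Type*} [CommRing A] {l l1 l2 : ℕ}
    (d1 : Matrix (Fin l) (Fin l1) A) (d2 : Matrix (Fin l2) (Fin l) A) :=
  LinearMap.ker d2.mulVecLin ⧸
    (LinearMap.range d1.mulVecLin).comap (LinearMap.ker d2.mulVecLin).subtype

section Aux

open Matrix

variable {κ : Type*} [Field κ]

lemma rank_submatrix_le_gen {I J : Type*} [Fintype I] [Fintype J] {m m' : ℕ}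
    (M : Matrix I J κ) (r : Fin m → I) (c : Fin m' → J) :
    (M.submatrix r c).rank ≤ M.rank := by
  have h1 : (M.submatrix r c).rank ≤ (M.submatrix (id : I → I) c).rank := by
    rw [rank_eq_finrank_span_row, rank_eq_finrank_span_row]
    apply Submodule.finrank_mono
    apply Submodule.span_mono
    rintro x ⟨i, rfl⟩
    exact ⟨r i, rfl⟩
  have h2 : (M.submatrix (id : I → I) c).rank ≤ M.rank := by
    rw [rank_eq_finrank_span_cols, rank_eq_finrank_span_cols]
    apply Submodule.finrank_mono
    apply Submodule.span_mono
    rintro x ⟨j, rfl⟩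
    exact ⟨c j, rfl⟩
  exact h1.trans h2

lemma exists_linearIndependent_rows {I J : Type*} [Fintype I] [Fintype J] {m : ℕ}
    (M : Matrix I J κ) (hm : m ≤ M.rank) :
    ∃ r : Fin m → I, Function.Injective r ∧ LinearIndependent κ (fun i => M (r i)) := by
  classical
  obtain ⟨b, hbsub, hbspan, hbli⟩ := exists_linearIndependent κ (Set.range M)
  haveI : Fintype b := ((Set.finite_range M).subset hbsub).fintype
  have hcard : M.rank ≤ Fintype.card b := by
    rw [rank_eq_finrank_span_row, show Set.range M.row = Set.range M from rfl, ← hbspan]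
    have := linearIndependent_iff_card_eq_finrank_span.mp hbli
    rw [Set.finrank, Subtype.range_coe] at this
    exact this.ge
  obtain ⟨f⟩ : Nonempty (Fin m ↪ b) :=
    Function.Embedding.nonempty_of_card_le (by simpa using hm.trans hcard)
  have hval : ∀ i : Fin m, ∃ x : I, M x = (f i : J → κ) := fun i => hbsub (f i).2
  choose r hr using hval
  have hMr : (fun i => M (r i)) = fun i => ((f i : b) : J → κ) := funext fun i => hr i
  refine ⟨r, ?_, ?_⟩
  · intro i i' h
    apply f.injective
    apply Subtype.ext
    rw [← hr i, ← hr i', h]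
  · rw [hMr]
    exact hbli.comp f f.injective

lemma le_rank_iff_exists_minor {I J : Type*} [Fintype I] [Fintype J]
    [DecidableEq I] [DecidableEq J] {m : ℕ} (M : Matrix I J κ) :
    m ≤ M.rank ↔ ∃ (r : Fin m → I) (c : Fin m → J),
      Function.Injective r ∧ Function.Injective c ∧ (M.submatrix r c).det ≠ 0 := by
  constructor
  · intro hm
    obtain ⟨c, hcinj, hcli⟩ := exists_linearIndependent_rows (m := m) Mᵀ (by rwa [rank_transpose])
    set N : Matrix (Fin m) I κ := Mᵀ.submatrix c id with hN
    have hNrank : N.rank = m := by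
      have : LinearIndependent κ N := by
        have : N = fun i => Mᵀ (c i) := rfl
        rw [this]; exact hcli
      rw [LinearIndependent.rank_matrix (M := N) this, Fintype.card_fin]
    obtain ⟨r, hrinj, hrli⟩ := exists_linearIndependent_rows (m := m) Nᵀ
      (by rw [rank_transpose, hNrank])
    refine ⟨r, c, hrinj, hcinj, ?_⟩
    have hrows : (fun i => (M.submatrix r c) i) = fun i => Nᵀ (r i) := by
      funext i j
      rfl
    have : IsUnit (M.submatrix r c) := by
      rw [← linearIndependent_rows_iff_isUnit]
      change LinearIndependent κ (fun i => (M.submatrix r c) i)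
      rw [hrows]
      exact hrli
    exact ((isUnit_iff_isUnit_det _).mp this).ne_zero
  · rintro ⟨r, c, hr, hc, hdet⟩
    have : (M.submatrix r c).rank = m := by
      rw [(M.submatrix r c).rank_of_isUnit ((isUnit_iff_isUnit_det _).mpr
        (isUnit_iff_ne_zero.mpr hdet)), Fintype.card_fin]
    rw [← this]
    exact rank_submatrix_le_gen M r c

lemma detIdeal_eq_bot_iff {I J : Type*} [Fintype I] [Fintype J]
    [DecidableEq I] [DecidableEq J] (M : Matrix I J κ) (m : ℤ) :
    detIdeal M m = ⊥ ↔ (M.rank : ℤ) < m := by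
  unfold detIdeal
  split_ifs with h
  · constructor
    · intro ht
      exact absurd (ht ▸ (Submodule.mem_top : (1:κ) ∈ (⊤ : Ideal κ))) (by simp)
    · intro hlt
      omega
  · rw [Ideal.span_eq_bot]
    have key := le_rank_iff_exists_minor (m := m.toNat) M
    constructor
    · intro hall
      have : ¬ m.toNat ≤ M.rank := by
        rw [key]
        rintro ⟨r, c, hr, hc, hdet⟩
        exact hdet (hall _ ⟨r, c, hr, hc, rfl⟩)
      omega
    · intro hlt x hx
      obtain ⟨r, c, hr, hc, rfl⟩ := hx
      by_contra hdet
      have : m.toNat ≤ M.rank := key.mpr ⟨r, c, hr, hc, hdet⟩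
      omega


end Aux

set_option maxHeartbeats 1000000 in
set_option synthInstance.maxHeartbeats 1000000 in
/-- Let `(d1, d2)` be a complex of free modules over a field `κ` with
middle rank `l`, and `k ≥ 1`. Then `dim_κ H^i ≥ k` if and only if the cohomology jump
ideal `J^i_k` is the zero ideal. -/
theorem finrank_cohomology_ge_iff_jumpIdeal_eq_bot
    {κ : Type*} [Field κ] {l l1 l2 : ℕ}
    (d1 : Matrix (Fin l) (Fin l1) κ) (d2 : Matrix (Fin l2) (Fin l) κ)
    (hcx : d2 * d1 = 0) (k : ℕ) (hk : 1 ≤ k) :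
    k ≤ Module.finrank κ (midCohomology d1 d2) ↔ jumpIdeal d1 d2 (k : ℤ) = ⊥ := by
  classical
  set r1 := d1.rank with hr1
  set r2 := d2.rank with hr2
  have hle : LinearMap.range d1.mulVecLin ≤ LinearMap.ker d2.mulVecLin := by
    rintro x ⟨v, rfl⟩
    have h0 : (d2 * d1).mulVecLin = 0 := by rw [hcx]; simp
    rw [LinearMap.mem_ker]
    have := congrFun (congrArg DFunLike.coe (Matrix.mulVecLin_mul d2 d1)) v
    rw [h0] at this
    simpa using this.symm
  -- dimension count
  have hker : Module.finrank κ (LinearMap.ker d2.mulVecLin) + r2 = l := by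
    have := LinearMap.finrank_range_add_finrank_ker d2.mulVecLin
    rw [Module.finrank_pi] at this
    simp only [Fintype.card_fin] at this
    rw [hr2, Matrix.rank]
    omega
  have hcomap : Module.finrank κ
      ((LinearMap.range d1.mulVecLin).comap (LinearMap.ker d2.mulVecLin).subtype) = r1 := by
    rw [(Submodule.comapSubtypeEquivOfLe hle).finrank_eq, hr1, Matrix.rank]
  have hquot : Module.finrank κ (midCohomology d1 d2) + r1 + r2 = l := by
    have h0 := Submodule.finrank_quotient_add_finrank
      ((LinearMap.range d1.mulVecLin).comap (LinearMap.ker d2.mulVecLin).subtype)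
    rw [hcomap] at h0
    have heq : Module.finrank κ (midCohomology d1 d2) =
        Module.finrank κ (↥(LinearMap.ker d2.mulVecLin) ⧸
          ((LinearMap.range d1.mulVecLin).comap (LinearMap.ker d2.mulVecLin).subtype)) := rfl
    rw [heq]
    omega
  -- jump ideal characterization
  have hjump : jumpIdeal d1 d2 (k : ℤ) = ⊥ ↔ (k : ℤ) ≤ (l : ℤ) - r1 - r2 := by
    constructor
    · intro h
      by_contra hlt
      have hall : ∀ a : ℤ, detIdeal d1 a + detIdeal d2 ((l : ℤ) - k + 2 - a) = ⊤ := by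
        intro a
        rcases Ideal.eq_bot_or_top (detIdeal d1 a + detIdeal d2 ((l : ℤ) - k + 2 - a))
          with hb | ht
        · exfalso
          rw [Submodule.add_eq_sup, sup_eq_bot_iff] at hb
          rw [detIdeal_eq_bot_iff] at hb
          have hb2 := hb.2
          rw [detIdeal_eq_bot_iff] at hb2
          have := hb.1
          omega
        · exact ht
      have htop : jumpIdeal d1 d2 (k : ℤ) = ⊤ := by
        rw [jumpIdeal, eq_top_iff]
        exact le_iInf fun a => (hall a).symm ▸ le_top
      rw [htop] at h
      exact (top_ne_bot : (⊤ : Ideal κ) ≠ ⊥) h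
    · intro h
      have hbot : detIdeal d1 ((r1 : ℤ) + 1) +
          detIdeal d2 ((l : ℤ) - k + 2 - ((r1 : ℤ) + 1)) = ⊥ := by
        rw [Submodule.add_eq_sup, sup_eq_bot_iff, detIdeal_eq_bot_iff, detIdeal_eq_bot_iff]
        omega
      exact le_bot_iff.mp ((iInf_le _ ((r1 : ℤ) + 1)).trans hbot.le)
  rw [hjump]
  omega
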